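/- As p decreases to p_c, (1 − f_p'(q_p))/(p − p_c) converges to m₁; that is, the mean of the dual (subcritical) offspring distribution satisfies μ_p* = f_p'(q_p) = 1 − m₁(p − p_c)(1 + o(1)). -/

import Mathlib

open Filter Set Topology
open scoped Topology

/-- The probability generating function `f(s) = ∑ₖ aₖ sᵏ` of a distribution `a` on ℕ. -/
noncomputable def pgf (a : ℕ → ℝ) (s : ℝ) : ℝ := ∑' n, a n * s ^ n

/-- The generating function `f_p(s) = f(ps + 1 - p)` of the binomially `p`-thinned
(percolated) offspring distribution. -/
noncomputable def pgfp (a : ℕ → ℝ) (p s : ℝ) : ℝ := pgf a (p * s + 1 - p)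

lemma hasSum_congr' {f g : ℕ → ℝ} {a : ℝ} (h : HasSum f a) (he : ∀ k, f k = g k) :
    HasSum g a := (funext he : f = g) ▸ h

lemma bern1 {x : ℝ} (hx1 : x ≤ 1) (n : ℕ) : 1 - (n:ℝ)*x ≤ (1-x)^n := by
  have := one_add_mul_le_pow (a := -x) (by linarith) n
  calc 1 - (n:ℝ)*x = 1 + n * (-x) := by ring
  _ ≤ (1 + -x)^n := this
  _ = (1-x)^n := by ring_nf

lemma bern2 {x : ℝ} (hx0 : 0 ≤ x) (hx1 : x ≤ 1) (n : ℕ) :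
    (1-x)^n ≤ 1 - (n:ℝ)*x + (n:ℝ)*((n:ℝ)-1)/2 * x^2 := by
  induction n with
  | zero => simp
  | succ k ih =>
    have h1 : (0:ℝ) ≤ 1 - x := by linarith
    have h2 : (0:ℝ) ≤ (1-x)^k := pow_nonneg h1 k
    have hb := bern1 hx1 k
    have hk : (0:ℝ) ≤ (k:ℝ) := Nat.cast_nonneg k
    push_cast
    have : (1-x)^(k+1) = (1-x)^k * (1-x) := by ring
    rw [this]
    nlinarith [mul_le_mul_of_nonneg_right ih h1, sq_nonneg x,
      mul_nonneg (mul_nonneg hk hk) (mul_nonneg hx0 (mul_nonneg hx0 hx0))]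

lemma bern3 {x : ℝ} (hx0 : 0 ≤ x) (hx1 : x ≤ 1) (n : ℕ) :
    1 - (n:ℝ)*x + (n:ℝ)*((n:ℝ)-1)/2 * x^2 - (n:ℝ)*((n:ℝ)-1)*((n:ℝ)-2)/6 * x^3 ≤ (1-x)^n := by
  induction n with
  | zero => norm_num
  | succ k ih =>
    have h1 : (0:ℝ) ≤ 1 - x := by linarith
    have hk : (0:ℝ) ≤ (k:ℝ) := Nat.cast_nonneg k
    push_cast
    have : (1-x)^(k+1) = (1-x)^k * (1-x) := by ring
    rw [this]
    have key := mul_le_mul_of_nonneg_right ih h1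
    have hkk : (0:ℝ) ≤ (k:ℝ)*((k:ℝ)-1)*((k:ℝ)-2) := by
      rcases Nat.lt_or_ge k 2 with h|h
      · interval_cases k <;> norm_num
      · have h2 : (2:ℝ) ≤ (k:ℝ) := by exact_mod_cast h
        exact mul_nonneg (mul_nonneg (by linarith) (by linarith)) (by linarith)
    nlinarith [key, mul_nonneg hkk (by positivity : (0:ℝ) ≤ x^4)]

lemma powMono {y z : ℝ} (h0 : 0 ≤ z) (hzy : z ≤ y) (hy : y ≤ 1) (n : ℕ) :
    y^n - z^n ≤ (n:ℝ)*(y - z) := by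
  induction n with
  | zero => simp
  | succ k ih =>
    have hz : z^k ≤ 1 := pow_le_one₀ h0 (le_trans hzy hy)
    have hyk : (0:ℝ) ≤ y^k := pow_nonneg (le_trans h0 hzy) k
    have hyk1 : y^k ≤ 1 := pow_le_one₀ (le_trans h0 hzy) hy
    push_cast
    have e1 : y^(k+1) = y * y^k := by ring
    have e2 : z^(k+1) = z * z^k := by ring
    rw [e1, e2]
    have hdiff : z^k ≤ y^k := pow_le_pow_left₀ h0 hzy k
    have hy0 : (0:ℝ) ≤ y := le_trans h0 hzy
    have hA : y*(y^k - z^k) ≤ y^k - z^k := by nlinarith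
    calc y*y^k - z*z^k = y*(y^k-z^k) + (y-z)*z^k := by ring
      _ ≤ (k:ℝ)*(y-z) + (y-z)*1 := add_le_add (hA.trans ih) (by nlinarith)
      _ = ((k:ℝ)+1)*(y-z) := by ring

lemma posLem {x : ℝ} (hx0 : 0 ≤ x) (hx1 : x ≤ 1) (n : ℕ) (hn : 2 ≤ n) :
    x^2 ≤ (n:ℝ)*x - 1 + (1-x)^n := by
  induction n, hn using Nat.le_induction with
  | base => push_cast; nlinarith
  | succ k hk ih =>
    have h1 : (0:ℝ) ≤ 1 - x := by linarith
    have h2 : (1-x)^k ≤ 1 := pow_le_one₀ h1 (by linarith)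
    push_cast
    have : (1-x)^(k+1) = (1-x)^k * (1-x) := by ring
    rw [this]
    push_cast at ih
    nlinarith [ih]

lemma hasDerivAt_pgf (a : ℕ → ℝ) (ha0 : ∀ k, 0 ≤ a k) (hsa : Summable a)
    (hs1 : Summable (fun k : ℕ => (k:ℝ) * a k)) {s : ℝ} (h0 : -1 < s) (h1 : s < 1) :
    HasDerivAt (pgf a) (∑' k : ℕ, a k * ((k:ℝ) * s ^ (k-1))) s := by
  have habs : |s| < 1 := abs_lt.2 ⟨h0, h1⟩
  exact hasDerivAt_tsum_of_isPreconnected (u := fun k : ℕ => (k:ℝ) * a k)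
    (g := fun (k : ℕ) (y : ℝ) => a k * y ^ k)
    (g' := fun (k : ℕ) (y : ℝ) => a k * ((k:ℝ) * y ^ (k-1)))
    hs1 isOpen_Ioo (convex_Ioo (-1:ℝ) 1).isPreconnected
    (fun n y _ => (hasDerivAt_pow n y).const_mul (a n))
    (fun n y hy => by
      have hy1 : |y| ≤ 1 := le_of_lt (abs_lt.2 ⟨hy.1, hy.2⟩)
      have : ‖a n * ((n:ℝ) * y ^ (n-1))‖ = a n * ((n:ℝ) * |y| ^ (n-1)) := by
        rw [Real.norm_eq_abs, abs_mul, abs_mul, abs_pow, abs_of_nonneg (ha0 n),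
          Nat.abs_cast]
      rw [this]
      have : |y| ^ (n-1) ≤ 1 := pow_le_one₀ (abs_nonneg y) hy1
      calc a n * ((n:ℝ) * |y| ^ (n-1)) ≤ a n * ((n:ℝ) * 1) := by
            apply mul_le_mul_of_nonneg_left _ (ha0 n)
            exact mul_le_mul_of_nonneg_left this (Nat.cast_nonneg n)
        _ = (n:ℝ) * a n := by ring)
    (mem_Ioo.2 ⟨h0, h1⟩)
    (by
      apply Summable.of_norm_bounded hsa
      intro n
      rw [Real.norm_eq_abs, abs_mul, abs_pow, abs_of_nonneg (ha0 n)]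
      exact mul_le_of_le_one_right (ha0 n) (pow_le_one₀ (abs_nonneg s) habs.le))
    (mem_Ioo.2 ⟨h0, h1⟩)

set_option maxHeartbeats 1000000 in
theorem dual_mean_asymptotics
    (a : ℕ → ℝ) (m₁ m₂ m₃ pc : ℝ) (q : ℝ → ℝ)
    (ha0 : ∀ k, 0 ≤ a k) (ha1 : HasSum a 1)
    (hm1 : HasSum (fun k : ℕ => (k : ℝ) * a k) m₁) (h1m : 1 < m₁)
    (hm2 : HasSum (fun k : ℕ => (k : ℝ) * ((k : ℝ) - 1) * a k) m₂)
    (hm3 : HasSum (fun k : ℕ => (k : ℝ) * ((k : ℝ) - 1) * ((k : ℝ) - 2) * a k) m₃)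
    (hpc : pc = 1 / m₁)
    (hq : ∀ p ∈ Set.Ioc pc 1, q p ∈ Set.Ico (0 : ℝ) 1 ∧ pgfp a p (q p) = q p) :
    Tendsto (fun p => (1 - deriv (pgfp a p) (q p)) / (p - pc)) (𝓝[>] pc) (𝓝 m₁) := by
  have hm1pos : (0:ℝ) < m₁ := lt_trans one_pos h1m
  have hm1ne : m₁ ≠ 0 := ne_of_gt hm1pos
  have hpc0 : 0 < pc := by rw [hpc]; positivity
  have hpc1 : pc < 1 := by rw [hpc, div_lt_one hm1pos]; exact h1m
  have hsa : Summable a := ha1.summable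
  have hs1 : Summable (fun k : ℕ => (k:ℝ)*a k) := hm1.summable
  have hs2 : Summable (fun k : ℕ => (k:ℝ)*((k:ℝ)-1)*a k) := hm2.summable
  have h2nn : ∀ k : ℕ, 0 ≤ (k:ℝ)*((k:ℝ)-1)*a k := by
    intro k
    rcases Nat.lt_or_ge k 1 with hk | hk
    · interval_cases k; simp
    · have : (1:ℝ) ≤ (k:ℝ) := by exact_mod_cast hk
      exact mul_nonneg (mul_nonneg (by linarith) (by linarith)) (ha0 k)
  have h3nn : ∀ k : ℕ, 0 ≤ (k:ℝ)*((k:ℝ)-1)*((k:ℝ)-2)*a k := by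
    intro k
    rcases Nat.lt_or_ge k 2 with hk | hk
    · interval_cases k <;> norm_num
    · have : (2:ℝ) ≤ (k:ℝ) := by exact_mod_cast hk
      exact mul_nonneg (mul_nonneg (mul_nonneg (by linarith) (by linarith)) (by linarith)) (ha0 k)
  have hm3nn : 0 ≤ m₃ := hm3.nonneg h3nn
  -- existence of k₀ ≥ 2 with a k₀ > 0
  obtain ⟨k₀, hk₀⟩ : ∃ k : ℕ, 0 < (k:ℝ)*((k:ℝ)-1)*a k := by
    by_contra hcon
    push_neg at hcon
    have hz : ∀ k : ℕ, 2 ≤ k → a k = 0 := by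
      intro k hk
      have h2 : (2:ℝ) ≤ (k:ℝ) := by exact_mod_cast hk
      have heq := le_antisymm (hcon k) (h2nn k)
      have hkk : (0:ℝ) < (k:ℝ)*((k:ℝ)-1) := by nlinarith
      have := mul_eq_zero.1 heq
      rcases this with h | h
      · exact absurd h (ne_of_gt hkk)
      · exact h
    have hle : m₁ ≤ 1 := by
      refine hasSum_le (fun k => ?_) hm1 ha1
      match k with
      | 0 => simpa using ha0 0
      | 1 => simp
      | (n+2) => rw [hz (n+2) (by omega)]; simp
    linarith
  have hk₀2 : 2 ≤ k₀ := by
    by_contra h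
    push_neg at h
    interval_cases k₀ <;> norm_num at hk₀
  have hak₀ : 0 < a k₀ := by
    rcases (ha0 k₀).lt_or_eq with h | h
    · exact h
    · rw [← h] at hk₀; norm_num at hk₀
  have hm2pos : 0 < m₂ := by
    have := Summable.le_tsum hs2 k₀ (fun j _ => h2nn j)
    rw [hm2.tsum_eq] at this
    linarith
  -- the functions A and B
  set A : ℝ → ℝ := fun x => ∑' k : ℕ, a k * ((k:ℝ)*x - 1 + (1-x)^k) with hAdef
  set B : ℝ → ℝ := fun x => ∑' k : ℕ, (k:ℝ) * a k * (1 - (1-x)^(k-1)) with hBdef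
  have hAtermnn : ∀ x : ℝ, 0 ≤ x → x ≤ 1 → ∀ k : ℕ, 0 ≤ a k * ((k:ℝ)*x - 1 + (1-x)^k) :=
    fun x hx0 hx1 k => mul_nonneg (ha0 k) (by linarith [bern1 hx1 k])
  have hAtermle : ∀ x : ℝ, 0 ≤ x → x ≤ 1 → ∀ k : ℕ,
      a k * ((k:ℝ)*x - 1 + (1-x)^k) ≤ ((k:ℝ)*((k:ℝ)-1)*a k) * (x^2/2) := by
    intro x hx0 hx1 k
    have h := bern2 hx0 hx1 k
    nlinarith [mul_le_mul_of_nonneg_left h (ha0 k)]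
  have hAsummable : ∀ x : ℝ, 0 ≤ x → x ≤ 1 →
      Summable (fun k : ℕ => a k * ((k:ℝ)*x - 1 + (1-x)^k)) :=
    fun x hx0 hx1 => Summable.of_nonneg_of_le (hAtermnn x hx0 hx1) (hAtermle x hx0 hx1)
      (hs2.mul_right _)
  have hAhas : ∀ x : ℝ, 0 ≤ x → x ≤ 1 →
      HasSum (fun k : ℕ => a k * ((k:ℝ)*x - 1 + (1-x)^k)) (A x) :=
    fun x hx0 hx1 => (hAsummable x hx0 hx1).hasSum
  have hAub : ∀ x : ℝ, 0 ≤ x → x ≤ 1 → A x ≤ m₂/2 * x^2 := by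
    intro x hx0 hx1
    have h := hasSum_le (hAtermle x hx0 hx1) (hAhas x hx0 hx1) (hm2.mul_right (x^2/2))
    linarith
  have hAlb : ∀ x : ℝ, 0 ≤ x → x ≤ 1 → m₂/2*x^2 - m₃/6*x^3 ≤ A x := by
    intro x hx0 hx1
    have hbnd : ∀ k : ℕ, ((k:ℝ)*((k:ℝ)-1)*a k)*(x^2/2) - ((k:ℝ)*((k:ℝ)-1)*((k:ℝ)-2)*a k)*(x^3/6)
        ≤ a k * ((k:ℝ)*x - 1 + (1-x)^k) := by
      intro k
      have h := bern3 hx0 hx1 k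
      nlinarith [mul_le_mul_of_nonneg_left h (ha0 k)]
    have h := hasSum_le hbnd ((hm2.mul_right (x^2/2)).sub (hm3.mul_right (x^3/6)))
      (hAhas x hx0 hx1)
    linarith
  have hAmono : ∀ x₁ x₂ : ℝ, 0 ≤ x₁ → x₁ ≤ x₂ → x₂ ≤ 1 → A x₁ ≤ A x₂ := by
    intro x₁ x₂ h0 h12 h21
    refine hasSum_le (fun k => ?_) (hAhas x₁ h0 (by linarith)) (hAhas x₂ (by linarith) h21)
    have := powMono (y := 1 - x₁) (z := 1 - x₂) (by linarith) (by linarith) (by linarith) k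
    nlinarith [mul_le_mul_of_nonneg_left this (ha0 k)]
  have hApos : ∀ δ : ℝ, 0 < δ → δ ≤ 1 → 0 < A δ := by
    intro δ h0 h1
    have hterm : a k₀ * δ^2 ≤ a k₀ * ((k₀:ℝ)*δ - 1 + (1-δ)^k₀) :=
      mul_le_mul_of_nonneg_left (posLem h0.le h1 k₀ hk₀2) (ha0 k₀)
    have hle := Summable.le_tsum (hAsummable δ h0.le h1) k₀ (fun j _ => hAtermnn δ h0.le h1 j)
    have hpos : 0 < a k₀ * δ^2 := by positivity
    calc (0:ℝ) < a k₀ * δ^2 := hpos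
      _ ≤ a k₀ * ((k₀:ℝ)*δ - 1 + (1-δ)^k₀) := hterm
      _ ≤ A δ := hle
  -- B facts
  have hBtermnn : ∀ x : ℝ, 0 ≤ x → x ≤ 1 → ∀ k : ℕ, 0 ≤ (k:ℝ) * a k * (1 - (1-x)^(k-1)) := by
    intro x hx0 hx1 k
    have h1 : (1-x)^(k-1) ≤ 1 := pow_le_one₀ (by linarith) (by linarith)
    exact mul_nonneg (mul_nonneg (Nat.cast_nonneg k) (ha0 k)) (by linarith)
  have hBtermle : ∀ x : ℝ, 0 ≤ x → x ≤ 1 → ∀ k : ℕ,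
      (k:ℝ) * a k * (1 - (1-x)^(k-1)) ≤ ((k:ℝ)*((k:ℝ)-1)*a k) * x := by
    intro x hx0 hx1 k
    cases k with
    | zero => simp
    | succ j =>
      have hb := bern1 hx1 j
      have hkann : (0:ℝ) ≤ ((j:ℝ)+1) * a (j+1) := mul_nonneg (by positivity) (ha0 (j+1))
      have h := mul_le_mul_of_nonneg_left (by linarith : 1 - (1-x)^j ≤ (j:ℝ)*x) hkann
      simp only [Nat.add_sub_cancel]
      push_cast
      nlinarith [h]
  have hBsummable : ∀ x : ℝ, 0 ≤ x → x ≤ 1 →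
      Summable (fun k : ℕ => (k:ℝ) * a k * (1 - (1-x)^(k-1))) :=
    fun x hx0 hx1 => Summable.of_nonneg_of_le (hBtermnn x hx0 hx1) (hBtermle x hx0 hx1)
      (hs2.mul_right _)
  have hBhas : ∀ x : ℝ, 0 ≤ x → x ≤ 1 →
      HasSum (fun k : ℕ => (k:ℝ) * a k * (1 - (1-x)^(k-1))) (B x) :=
    fun x hx0 hx1 => (hBsummable x hx0 hx1).hasSum
  have hBub : ∀ x : ℝ, 0 ≤ x → x ≤ 1 → B x ≤ m₂ * x := by
    intro x hx0 hx1
    exact hasSum_le (hBtermle x hx0 hx1) (hBhas x hx0 hx1) (hm2.mul_right x)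
  have hBlb : ∀ x : ℝ, 0 ≤ x → x ≤ 1 → m₂*x - m₃/2*x^2 ≤ B x := by
    intro x hx0 hx1
    have hbnd : ∀ k : ℕ, ((k:ℝ)*((k:ℝ)-1)*a k)*x - ((k:ℝ)*((k:ℝ)-1)*((k:ℝ)-2)*a k)*(x^2/2)
        ≤ (k:ℝ) * a k * (1 - (1-x)^(k-1)) := by
      intro k
      cases k with
      | zero => simp
      | succ j =>
        have hb := bern2 hx0 hx1 j
        have hkann : (0:ℝ) ≤ ((j:ℝ)+1) * a (j+1) := mul_nonneg (by positivity) (ha0 (j+1))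
        have h := mul_le_mul_of_nonneg_left
          (by linarith : (j:ℝ)*x - (j:ℝ)*((j:ℝ)-1)/2*x^2 ≤ 1 - (1-x)^j) hkann
        simp only [Nat.add_sub_cancel]
        push_cast
        nlinarith [h]
    have h := hasSum_le hbnd ((hm2.mul_right x).sub (hm3.mul_right (x^2/2)))
      (hBhas x hx0 hx1)
    linarith
  -- value and derivative identities
  have hval : ∀ x : ℝ, 0 ≤ x → x ≤ 1 → pgf a (1-x) = 1 - m₁*x + A x := by
    intro x hx0 hx1
    have h := ((hAhas x hx0 hx1).sub (hm1.mul_right x)).add ha1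
    have h' : HasSum (fun k : ℕ => a k * (1-x)^k) (A x - m₁*x + 1) :=
      hasSum_congr' h (fun k => by ring)
    have := h'.tsum_eq
    rw [pgf]
    rw [this]; ring
  have hderiv : ∀ x : ℝ, 0 < x → x ≤ 1 → HasDerivAt (pgf a) (m₁ - B x) (1-x) := by
    intro x hx0 hx1
    have hD := hasDerivAt_pgf a ha0 hsa hs1 (s := 1-x) (by linarith) (by linarith)
    have hB' : HasSum (fun k : ℕ => a k * ((k:ℝ)*(1-x)^(k-1))) (m₁ - B x) :=
      hasSum_congr' (hm1.sub (hBhas x hx0.le hx1)) (fun k => by ring)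
    rwa [hB'.tsum_eq] at hD
  -- main per-point facts
  have hmain : ∀ p ∈ Set.Ioc pc 1, 0 < p*(1 - q p) ∧ p*(1 - q p) ≤ 1 ∧
      A (p*(1 - q p)) = (m₁*p - 1)*(1 - q p) ∧
      (1 - deriv (pgfp a p) (q p))/(p - pc)
        = m₁ * ((p*(1 - q p)) * B (p*(1 - q p)) / A (p*(1 - q p)) - 1) := by
    intro p hp
    obtain ⟨⟨hq0, hq1⟩, hfix⟩ := hq p hp
    have hppc : pc < p := hp.1
    have hp0 : 0 < p := lt_trans hpc0 hppc
    have hp1 : p ≤ 1 := hp.2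
    set ε := 1 - q p with hεdef
    have hε0 : 0 < ε := by simp only [hεdef]; linarith
    have hε1 : ε ≤ 1 := by simp only [hεdef]; linarith
    set x := p * ε with hxdef
    have hx0 : 0 < x := mul_pos hp0 hε0
    have hx1 : x ≤ 1 := mul_le_one₀ hp1 hε0.le hε1
    have hm1p : 1 < m₁ * p := by
      rw [hpc, div_lt_iff₀ hm1pos] at hppc
      linarith [hppc]
    have hpt : p * q p + 1 - p = 1 - x := by simp only [hxdef, hεdef]; ring
    -- fixed point gives A x = (m₁ p - 1) ε
    have hfix' : pgf a (1 - x) = 1 - ε := by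
      rw [← hpt]
      show pgfp a p (q p) = 1 - ε
      rw [hfix]; simp only [hεdef]; ring
    have hAx : A x = (m₁*p - 1)*ε := by
      have h1 := hval x hx0.le hx1
      rw [hfix'] at h1
      have h2 : A x = m₁*x - ε := by linarith
      rw [h2, hxdef]; ring
    have hAxpos : 0 < A x := by
      rw [hAx]
      exact mul_pos (by linarith) hε0
    -- derivative
    have hD : HasDerivAt (pgf a) (m₁ - B x) (p * q p + 1 - p) := by
      rw [hpt]; exact hderiv x hx0 hx1
    have hinner : HasDerivAt (fun s : ℝ => p * s + 1 - p) p (q p) := by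
      have h := (((hasDerivAt_id (q p)).const_mul p).add_const 1).sub_const p
      simpa using h
    have hcomp : HasDerivAt (pgfp a p) ((m₁ - B x) * p) (q p) := hD.comp (q p) hinner
    have hder : deriv (pgfp a p) (q p) = (m₁ - B x) * p := hcomp.deriv
    refine ⟨hx0, hx1, hAx, ?_⟩
    rw [hder, hAx]
    have hppc' : p - pc = (m₁*p - 1)/m₁ := by rw [hpc]; field_simp
    rw [hppc', hxdef]
    have h1 : m₁*p - 1 ≠ 0 := ne_of_gt (by linarith)
    have h2 : ε ≠ 0 := ne_of_gt hε0
    field_simp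
    ring
  -- limit of x(p)
  have hIoc : Set.Ioc pc 1 ∈ 𝓝[>] pc := Ioc_mem_nhdsGT_of_mem (left_mem_Ico.2 hpc1)
  have hXlim : Tendsto (fun p => p*(1 - q p)) (𝓝[>] pc) (𝓝[>] (0:ℝ)) := by
    rw [tendsto_nhdsWithin_iff]
    constructor
    · rw [tendsto_order]
      constructor
      · intro b hb
        filter_upwards [hIoc] with p hp
        exact lt_trans hb (hmain p hp).1
      · intro b hb
        have hδ0 : 0 < min b 1 := lt_min hb one_pos
        have hδ1 : min b 1 ≤ 1 := min_le_right _ _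
        have hAδ : 0 < A (min b 1) := hApos _ hδ0 hδ1
        have hcont : Tendsto (fun p : ℝ => m₁*p - 1) (𝓝[>] pc) (𝓝 (m₁ * pc - 1)) :=
          (((continuous_const.mul continuous_id).sub continuous_const).tendsto pc).mono_left
            nhdsWithin_le_nhds
        rw [show m₁*pc - 1 = 0 by rw [hpc]; field_simp; norm_num] at hcont
        have hev2 : ∀ᶠ p in 𝓝[>] pc, m₁*p - 1 < A (min b 1) :=
          hcont.eventually_lt_const hAδ
        filter_upwards [hIoc, hev2] with p hp hlt
        by_contra hcon
        push_neg at hcon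
        have hδX : min b 1 ≤ p*(1 - q p) := le_trans (min_le_left _ _) hcon
        have hAA := hAmono (min b 1) (p*(1 - q p)) hδ0.le hδX (hmain p hp).2.1
        have hApX := (hmain p hp).2.2.1
        obtain ⟨⟨hq0, hq1⟩, _⟩ := hq p hp
        have hm1p : 0 ≤ m₁ * p - 1 := by
          have := hp.1
          rw [hpc, div_lt_iff₀ hm1pos] at this
          linarith
        have hεle : 1 - q p ≤ 1 := by linarith
        linarith [hAA, hApX, hlt, mul_le_of_le_one_right hm1p hεle]
    · filter_upwards [hIoc] with p hp
      exact (hmain p hp).1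
  -- limit of the ratio function
  have hG : Tendsto (fun x : ℝ => m₁ * (x * B x / A x - 1)) (𝓝[>] (0:ℝ)) (𝓝 m₁) := by
    have hx₀0 : 0 < min 1 (3*m₂/(2*(m₃+1))) := by positivity
    have hlo : Tendsto (fun x : ℝ => m₁ * ((2 - m₃/m₂*x) - 1)) (𝓝[>] (0:ℝ)) (𝓝 m₁) := by
      have hc : Continuous (fun x : ℝ => m₁ * ((2 - m₃/m₂*x) - 1)) := by continuity
      have := (hc.tendsto 0).mono_left (nhdsWithin_le_nhds (s := Set.Ioi (0:ℝ)))
      have h2 : m₁ * (2 - m₃/m₂*0 - 1) = m₁ := by norm_num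
      rw [h2] at this
      exact this
    have hhi : Tendsto (fun x : ℝ => m₁ * (m₂/(m₂/2 - m₃*x/6) - 1)) (𝓝[>] (0:ℝ)) (𝓝 m₁) := by
      have hc : ContinuousAt (fun x : ℝ => m₁ * (m₂/(m₂/2 - m₃*x/6) - 1)) 0 := by
        apply ContinuousAt.mul continuousAt_const
        apply ContinuousAt.sub _ continuousAt_const
        apply ContinuousAt.div continuousAt_const
        · fun_prop
        · simp; linarith
      have := hc.tendsto.mono_left (nhdsWithin_le_nhds (s := Set.Ioi (0:ℝ)))
      have heval : m₁ * (m₂/(m₂/2 - m₃*(0:ℝ)/6) - 1) = m₁ := by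
        rw [show m₂/2 - m₃*(0:ℝ)/6 = m₂/2 by ring]
        rw [div_div_eq_mul_div]
        rw [mul_comm m₂ 2, mul_div_assoc, div_self hm2pos.ne', mul_one]
        ring
      rw [heval] at this
      exact this
    refine tendsto_of_tendsto_of_tendsto_of_le_of_le' hlo hhi ?_ ?_
    · filter_upwards [Ioc_mem_nhdsGT_of_mem (left_mem_Ico.2 hx₀0)] with x hx
      obtain ⟨hx0, hxle⟩ := hx
      have hx1 : x ≤ 1 := le_trans hxle (min_le_left _ _)
      have hx2 : x ≤ 3*m₂/(2*(m₃+1)) := le_trans hxle (min_le_right _ _)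
      have hm3x : m₃*x ≤ 3*m₂/2 := by
        have h1 : 0 < 2*(m₃+1) := by linarith
        rw [le_div_iff₀ h1] at hx2
        nlinarith [hx2, hx0.le]
      have hAu := hAub x hx0.le hx1
      have hAl := hAlb x hx0.le hx1
      have hBl := hBlb x hx0.le hx1
      have hApos' : 0 < A x := by nlinarith [hAl, sq_nonneg x, pow_pos hx0 2, pow_pos hx0 3]
      have hc1 : 0 ≤ 2 - m₃/m₂*x := by
        have hle : m₃/m₂*x ≤ 3/2 := by
          rw [div_mul_eq_mul_div, div_le_iff₀ hm2pos]
          linarith [hm3x]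
        linarith
      apply mul_le_mul_of_nonneg_left _ hm1pos.le
      apply sub_le_sub_right
      rw [le_div_iff₀ hApos']
      calc (2 - m₃/m₂*x) * A x ≤ (2 - m₃/m₂*x) * (m₂/2*x^2) :=
            mul_le_mul_of_nonneg_left hAu hc1
        _ = m₂*x^2 - m₃/2*x^3 := by field_simp
        _ ≤ x * B x := by nlinarith [mul_le_mul_of_nonneg_left hBl hx0.le]
    · filter_upwards [Ioc_mem_nhdsGT_of_mem (left_mem_Ico.2 hx₀0)] with x hx
      obtain ⟨hx0, hxle⟩ := hx
      have hx1 : x ≤ 1 := le_trans hxle (min_le_left _ _)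
      have hx2 : x ≤ 3*m₂/(2*(m₃+1)) := le_trans hxle (min_le_right _ _)
      have hm3x : m₃*x ≤ 3*m₂/2 := by
        have h1 : 0 < 2*(m₃+1) := by linarith
        rw [le_div_iff₀ h1] at hx2
        nlinarith [hx2, hx0.le]
      have hAl := hAlb x hx0.le hx1
      have hBu := hBub x hx0.le hx1
      have hBn : 0 ≤ B x := tsum_nonneg (hBtermnn x hx0.le hx1)
      have hd : 0 < m₂/2 - m₃*x/6 := by linarith
      have hxB : x * B x ≤ m₂*x^2 := by nlinarith
      have hAl2 : x^2*(m₂/2 - m₃*x/6) ≤ A x := by nlinarith [hAl]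
      apply mul_le_mul_of_nonneg_left _ hm1pos.le
      apply sub_le_sub_right
      calc x * B x / A x ≤ (m₂*x^2)/(x^2*(m₂/2 - m₃*x/6)) := by
            apply div_le_div₀ (by positivity) hxB (by positivity) hAl2
        _ = m₂/(m₂/2 - m₃*x/6) := by
            rw [show m₂*x^2 = x^2*m₂ by ring]
            rw [mul_div_mul_left _ _ (by positivity : (x:ℝ)^2 ≠ 0)]
  -- conclude
  have hcomp := hG.comp hXlim
  refine Tendsto.congr' ?_ hcomp
  filter_upwards [hIoc] with p hp
  exact ((hmain p hp).2.2.2).symm
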